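/- For a semigroup S and g,h ∈ S¹, the map φ_{g,h} : D_{g,h} → D_{h,g} sending a to hag is a semigroup isomorphism from D_{g,h} onto D_{h,g}, with inverse φ_{h,g} : b ↦ gbh. -/

import Mathlib

/-- The domain `D_{g,h}` viewed inside `S¹ = WithOne S`: coerced elements `a` of `S`
with `gh·a = a·gh = a`. -/
def Dset {S : Type*} [Semigroup S] (g h : WithOne S) : Set (WithOne S) :=
  { x | (∃ a : S, x = (a : WithOne S)) ∧ g * h * x = x ∧ x * (g * h) = x }

lemma coe_of_ne_one {S : Type*} [Semigroup S] {x : WithOne S} (hx : x ≠ 1) :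
    ∃ a : S, x = (a : WithOne S) := by
  induction x using WithOne.recOneCoe with
  | one => exact absurd rfl hx
  | coe a => exact ⟨a, rfl⟩

lemma my_mul_ne_one {S : Type*} [Semigroup S] {x y : WithOne S} (hx : x ≠ 1) :
    x * y ≠ 1 := by
  induction x using WithOne.recOneCoe with
  | one => exact absurd rfl hx
  | coe a =>
    induction y using WithOne.recOneCoe with
    | one => simpa using hx
    | coe b =>
      show ((a * b : S) : WithOne S) ≠ 1
      exact WithOne.coe_ne_one

lemma mul_ne_one_right' {S : Type*} [Semigroup S] {x y : WithOne S} (hy : y ≠ 1) :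
    x * y ≠ 1 := by
  induction y using WithOne.recOneCoe with
  | one => exact absurd rfl hy
  | coe b =>
    induction x using WithOne.recOneCoe with
    | one => simpa using hy
    | coe a =>
      show ((a * b : S) : WithOne S) ≠ 1
      exact WithOne.coe_ne_one

lemma ne_one_of_mem {S : Type*} [Semigroup S] {g h x : WithOne S}
    (hx : x ∈ Dset g h) : x ≠ 1 := by
  obtain ⟨⟨a, rfl⟩, _, _⟩ := hx
  exact WithOne.coe_ne_one

lemma phi_mem {S : Type*} [Semigroup S] (g h : WithOne S) :
    ∀ x ∈ Dset g h, h * x * g ∈ Dset h g := by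
  rintro x ⟨⟨a, rfl⟩, h1, h2⟩
  refine ⟨?_, ?_, ?_⟩
  · apply coe_of_ne_one
    exact my_mul_ne_one (mul_ne_one_right' WithOne.coe_ne_one)
  · calc h * g * (h * (a : WithOne S) * g) = h * (g * h * a) * g := by
          simp only [mul_assoc]
      _ = h * a * g := by rw [h1]
  · calc h * (a : WithOne S) * g * (h * g) = h * (a * (g * h)) * g := by
          simp only [mul_assoc]
      _ = h * a * g := by rw [h2]

theorem phi_iso {S : Type*} [Semigroup S] (g h : WithOne S) :
    (∀ x ∈ Dset g h, h * x * g ∈ Dset h g) ∧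
    (∀ y ∈ Dset h g, g * y * h ∈ Dset g h) ∧
    (∀ x ∈ Dset g h, g * (h * x * g) * h = x) ∧
    (∀ y ∈ Dset h g, h * (g * y * h) * g = y) ∧
    (∀ x₁ ∈ Dset g h, ∀ x₂ ∈ Dset g h,
      h * (x₁ * x₂) * g = (h * x₁ * g) * (h * x₂ * g)) := by
  refine ⟨phi_mem g h, phi_mem h g, ?_, ?_, ?_⟩
  · rintro x ⟨⟨a, rfl⟩, h1, h2⟩
    calc g * (h * (a : WithOne S) * g) * h = g * h * a * (g * h) := by
          simp only [mul_assoc]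
      _ = (a : WithOne S) := by rw [h1, h2]
  · rintro y ⟨⟨a, rfl⟩, h1, h2⟩
    calc h * (g * (a : WithOne S) * h) * g = h * g * a * (h * g) := by
          simp only [mul_assoc]
      _ = (a : WithOne S) := by rw [h1, h2]
  · rintro x₁ ⟨⟨a, rfl⟩, _, h2⟩ x₂ ⟨⟨b, rfl⟩, h3, _⟩
    calc h * ((a : WithOne S) * b) * g
        = h * (a * (g * h * b)) * g := by rw [h3]
      _ = (h * a * g) * (h * b * g) := by simp only [mul_assoc]
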